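/- Assume U satisfies Assumption 1 and is concave, and X satisfies Assumption 2. Let ĉ ∈ [0,+∞) be any number with Γ(ĉ) > −∞. Then Γ(c) > −∞ for all c ∈ [0, ĉ] and Γ is concave on [0, ĉ]; if in addition U is strictly concave, then Γ is strictly concave on [0, ĉ]. -/

import Mathlib

open MeasureTheory ProbabilityTheory Filter Matrix
open scoped ENNReal NNReal Topology

noncomputable section

/-- Signed expectation with values in `EReal`. -/
def eexp {Ω : Type*} [MeasurableSpace Ω] (P : Measure Ω) (f : Ω → ℝ) : EReal :=
  ((∫⁻ ω, ENNReal.ofReal (f ω) ∂P : ℝ≥0∞) : EReal) -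
    ((∫⁻ ω, ENNReal.ofReal (-(f ω)) ∂P : ℝ≥0∞) : EReal)

/-- NMVM return vector `X = μ + γ Z + √Z A N`. -/
def nmvmX {Ω : Type*} {d : ℕ} (μ γ : Fin d → ℝ) (A : Matrix (Fin d) (Fin d) ℝ)
    (Z : Ω → ℝ) (N : Ω → Fin d → ℝ) (ω : Ω) : Fin d → ℝ :=
  fun i => μ i + γ i * Z ω + Real.sqrt (Z ω) * (A *ᵥ N ω) i

/-- Next-period wealth `W(x) = W₀(1+r_f) + W₀ xᵀ(X − 𝟏 r_f)` of portfolio `x`. -/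
def wealth {Ω : Type*} {d : ℕ} (μ γ : Fin d → ℝ) (A : Matrix (Fin d) (Fin d) ℝ)
    (Z : Ω → ℝ) (N : Ω → Fin d → ℝ) (rf W0 : ℝ) (x : Fin d → ℝ) (ω : Ω) : ℝ :=
  W0 * (1 + rf) + W0 * ∑ i, x i * (nmvmX μ γ A Z N ω i - rf)

/-- The vector `v = μ − 𝟏 r_f + γ E[Z]`. -/
def vVec {Ω : Type*} [MeasurableSpace Ω] (P : Measure Ω) {d : ℕ}
    (μ γ : Fin d → ℝ) (rf : ℝ) (Z : Ω → ℝ) : Fin d → ℝ :=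
  fun i => μ i - rf + γ i * ∫ ω, Z ω ∂P

/-- The quadratic form `vᵀ Σ⁻¹ v`. -/
def vSv {Ω : Type*} [MeasurableSpace Ω] (P : Measure Ω) {d : ℕ}
    (μ γ : Fin d → ℝ) (rf : ℝ) (A : Matrix (Fin d) (Fin d) ℝ) (Z : Ω → ℝ) : ℝ :=
  vVec P μ γ rf Z ⬝ᵥ ((A * Aᵀ)⁻¹ *ᵥ vVec P μ γ rf Z)

/-- `α = vᵀΣ⁻¹(μ − 𝟏 r_f)/(vᵀΣ⁻¹v)`. -/
def alphaC {Ω : Type*} [MeasurableSpace Ω] (P : Measure Ω) {d : ℕ}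
    (μ γ : Fin d → ℝ) (rf : ℝ) (A : Matrix (Fin d) (Fin d) ℝ) (Z : Ω → ℝ) : ℝ :=
  (vVec P μ γ rf Z ⬝ᵥ ((A * Aᵀ)⁻¹ *ᵥ fun i => μ i - rf)) / vSv P μ γ rf A Z

/-- `β = vᵀΣ⁻¹γ/(vᵀΣ⁻¹v)`. -/
def betaC {Ω : Type*} [MeasurableSpace Ω] (P : Measure Ω) {d : ℕ}
    (μ γ : Fin d → ℝ) (rf : ℝ) (A : Matrix (Fin d) (Fin d) ℝ) (Z : Ω → ℝ) : ℝ :=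
  (vVec P μ γ rf Z ⬝ᵥ ((A * Aᵀ)⁻¹ *ᵥ γ)) / vSv P μ γ rf A Z

/-- `σ = 1/√(vᵀΣ⁻¹v)`. -/
def sigmaC {Ω : Type*} [MeasurableSpace Ω] (P : Measure Ω) {d : ℕ}
    (μ γ : Fin d → ℝ) (rf : ℝ) (A : Matrix (Fin d) (Fin d) ℝ) (Z : Ω → ℝ) : ℝ :=
  1 / Real.sqrt (vSv P μ γ rf A Z)

/-- `Γ(c) = E[U(W₀(1+r_f) + W₀ c (α + β Z + σ √Z N₁))]`, valued in `EReal`. -/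
def GammaFun {Ω : Type*} [MeasurableSpace Ω] (P : Measure Ω) {d : ℕ}
    (μ γ : Fin d → ℝ) (rf : ℝ) (A : Matrix (Fin d) (Fin d) ℝ) (Z : Ω → ℝ)
    (N1 : Ω → ℝ) (W0 : ℝ) (U : ℝ → ℝ) (c : ℝ) : EReal :=
  eexp P fun ω => U (W0 * (1 + rf) + W0 * c *
    (alphaC P μ γ rf A Z + betaC P μ γ rf A Z * Z ω +
      sigmaC P μ γ rf A Z * Real.sqrt (Z ω) * N1 ω))

lemma eexp_eq_bot {Ω : Type*} [MeasurableSpace Ω] (P : Measure Ω) {f : Ω → ℝ}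
    (h : (∫⁻ ω, ENNReal.ofReal (-(f ω)) ∂P) = ⊤) : eexp P f = ⊥ := by
  rw [eexp, h, EReal.coe_ennreal_top, EReal.sub_top]

lemma coe_ennreal_eq_coe_toReal {x : ℝ≥0∞} (hx : x ≠ ⊤) :
    (x : EReal) = ((x.toReal : ℝ) : EReal) := by
  conv_lhs => rw [← ENNReal.ofReal_toReal hx]
  rw [EReal.coe_ennreal_ofReal, max_eq_left ENNReal.toReal_nonneg]

lemma eexp_eq_integral {Ω : Type*} [MeasurableSpace Ω] (P : Measure Ω) [IsProbabilityMeasure P]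
    {f : Ω → ℝ} (hf : Measurable f) {M : ℝ} (hM : ∀ ω, f ω ≤ M)
    (hneg : (∫⁻ ω, ENNReal.ofReal (-(f ω)) ∂P) < ⊤) :
    Integrable f P ∧ eexp P f = ((∫ ω, f ω ∂P : ℝ) : EReal) := by
  have hpos : (∫⁻ ω, ENNReal.ofReal (f ω) ∂P) ≤ ENNReal.ofReal M := by
    calc (∫⁻ ω, ENNReal.ofReal (f ω) ∂P) ≤ ∫⁻ _, ENNReal.ofReal M ∂P :=
          lintegral_mono fun ω => ENNReal.ofReal_le_ofReal (hM ω)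
      _ = ENNReal.ofReal M := by rw [lintegral_const, measure_univ, mul_one]
  have hpos_lt : (∫⁻ ω, ENNReal.ofReal (f ω) ∂P) < ⊤ :=
    lt_of_le_of_lt hpos ENNReal.ofReal_lt_top
  have hpt : ∀ x : ℝ, ENNReal.ofReal |x| ≤ ENNReal.ofReal x + ENNReal.ofReal (-x) := by
    intro x
    rcases le_total 0 x with h | h
    · rw [abs_of_nonneg h]; exact le_self_add
    · rw [abs_of_nonpos h]; exact le_add_self
  have hint : Integrable f P := by
    refine ⟨hf.aestronglyMeasurable, ?_⟩
    rw [hasFiniteIntegral_iff_norm]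
    calc (∫⁻ ω, ENNReal.ofReal ‖f ω‖ ∂P)
        ≤ ∫⁻ ω, (ENNReal.ofReal (f ω) + ENNReal.ofReal (-(f ω))) ∂P :=
          lintegral_mono fun ω => by simpa [Real.norm_eq_abs] using hpt (f ω)
      _ = (∫⁻ ω, ENNReal.ofReal (f ω) ∂P) + ∫⁻ ω, ENNReal.ofReal (-(f ω)) ∂P :=
          lintegral_add_left hf.ennreal_ofReal _
      _ < ⊤ := ENNReal.add_lt_top.2 ⟨hpos_lt, hneg⟩
  refine ⟨hint, ?_⟩
  rw [eexp, integral_eq_lintegral_pos_part_sub_lintegral_neg_part hint,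
    coe_ennreal_eq_coe_toReal hpos_lt.ne, coe_ennreal_eq_coe_toReal hneg.ne,
    ← EReal.coe_sub]

lemma eta_ne_zero_pos {Ω : Type*} [MeasurableSpace Ω] (P : Measure Ω) [IsProbabilityMeasure P]
    {Z N1 : Ω → ℝ} (hZmeas : Measurable Z) (hN1meas : Measurable N1)
    (hN1law : Measure.map N1 P = gaussianReal 0 1)
    (hindep1 : IndepFun Z N1 P) (hZpos : ∀ ω, 0 < Z ω)
    (a b s : ℝ) (hs : 0 < s) :
    0 < P {ω | a + b * Z ω + s * Real.sqrt (Z ω) * N1 ω ≠ 0} := by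
  set S : Set (ℝ × ℝ) := {p : ℝ × ℝ | a + b * p.1 + s * Real.sqrt p.1 * p.2 = 0} with hS
  have hSmeas : MeasurableSet S := by
    have h1 : Measurable fun p : ℝ × ℝ => a + b * p.1 + s * Real.sqrt p.1 * p.2 := by
      fun_prop
    exact measurableSet_eq_fun h1 measurable_const
  have hprod : P.map (fun ω => (Z ω, N1 ω)) = (P.map Z).prod (gaussianReal 0 1) := by
    rw [← hN1law]
    exact (indepFun_iff_map_prod_eq_prod_map_map hZmeas.aemeasurable hN1meas.aemeasurable).1
      hindep1
  have hmapZ : ∀ᵐ z ∂(P.map Z), 0 < z := by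
    rw [ae_map_iff hZmeas.aemeasurable (measurableSet_Ioi (a := (0:ℝ)))]
    exact ae_of_all _ hZpos
  have hP0 : P {ω | a + b * Z ω + s * Real.sqrt (Z ω) * N1 ω = 0} = 0 := by
    have hpre : {ω | a + b * Z ω + s * Real.sqrt (Z ω) * N1 ω = 0}
        = (fun ω => (Z ω, N1 ω)) ⁻¹' S := rfl
    rw [hpre, ← Measure.map_apply (hZmeas.prodMk hN1meas) hSmeas, hprod,
      Measure.prod_apply hSmeas]
    have hae : (fun z => gaussianReal 0 1 (Prod.mk z ⁻¹' S)) =ᵐ[P.map Z] 0 := by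
      filter_upwards [hmapZ] with z hz
      have hsz : s * Real.sqrt z ≠ 0 :=
        mul_ne_zero hs.ne' (ne_of_gt (Real.sqrt_pos.2 hz))
      have hset : Prod.mk z ⁻¹' S = {(-(a + b * z)) / (s * Real.sqrt z)} := by
        ext n
        simp only [hS, Set.mem_preimage, Set.mem_setOf_eq, Set.mem_singleton_iff]
        constructor
        · intro h
          field_simp
          linarith
        · intro h
          rw [h]
          field_simp
          ring
      rw [hset]
      have habs := gaussianReal_absolutelyContinuous (0:ℝ) (one_ne_zero : (1:ℝ≥0) ≠ 0)
      exact habs (measure_singleton _)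
    rw [lintegral_congr_ae hae]
    simp
  have hcompl : {ω | a + b * Z ω + s * Real.sqrt (Z ω) * N1 ω ≠ 0}
      = {ω | a + b * Z ω + s * Real.sqrt (Z ω) * N1 ω = 0}ᶜ := rfl
  have hmeas0 : MeasurableSet {ω | a + b * Z ω + s * Real.sqrt (Z ω) * N1 ω = 0} := by
    have : Measurable fun ω => a + b * Z ω + s * Real.sqrt (Z ω) * N1 ω := by fun_prop
    exact measurableSet_eq_fun this measurable_const
  rw [hcompl, measure_compl hmeas0 (measure_ne_top P _), hP0, measure_univ, tsub_zero]
  exact zero_lt_one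

/-- under Assumptions 1, 2 and concavity of `U`, if `Γ(chat) > −∞` for some
`chat ≥ 0`, then `Γ(c) > −∞` for all `c ∈ [0, chat]` and `Γ` is concave on `[0, chat]`;
if moreover `U` is strictly concave, `Γ` is strictly concave on `[0, chat]`. -/
theorem stmt9 {Ω : Type*} [MeasurableSpace Ω] (P : Measure Ω) [IsProbabilityMeasure P]
    {d : ℕ} (μ γ : Fin d → ℝ) (A : Matrix (Fin d) (Fin d) ℝ)
    (Z : Ω → ℝ) (N : Ω → Fin d → ℝ) (N1 : Ω → ℝ)
    (hZmeas : Measurable Z) (hNmeas : Measurable N) (hN1meas : Measurable N1)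
    (hNlaw : Measure.map N P = Measure.pi fun _ : Fin d => gaussianReal 0 1)
    (hindep : IndepFun Z N P)
    (hN1law : Measure.map N1 P = gaussianReal 0 1)
    (hindep1 : IndepFun Z N1 P)
    (hPD : (A * Aᵀ).PosDef)
    (rf W0 : ℝ) (hW0 : 0 < W0)
    -- Assumption 1
    (U : ℝ → ℝ) (hUcont : Continuous U) (hUmono : Monotone U)
    (hUnonconst : ∃ w w' : ℝ, U w ≠ U w') (hUbdd : BddAbove (Set.range U))
    (hUbot : Tendsto U atBot atBot)
    -- concavity
    (hUconc : ConcaveOn ℝ Set.univ U)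
    -- Assumption 2
    (hZpos : ∀ ω, 0 < Z ω)
    (hZk : ∃ k : ℕ, 1 ≤ k ∧ (∫⁻ ω, ENNReal.ofReal (Z ω ^ k) ∂P) < ⊤)
    (hv : vVec P μ γ rf Z ≠ 0)
    (chat : ℝ) (hchat : 0 ≤ chat)
    (hΓchat : ⊥ < GammaFun P μ γ rf A Z N1 W0 U chat) :
    (∀ c ∈ Set.Icc (0 : ℝ) chat, ⊥ < GammaFun P μ γ rf A Z N1 W0 U c) ∧
    ConcaveOn ℝ (Set.Icc (0 : ℝ) chat)
      (fun c => (GammaFun P μ γ rf A Z N1 W0 U c).toReal) ∧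
    (StrictConcaveOn ℝ Set.univ U →
      StrictConcaveOn ℝ (Set.Icc (0 : ℝ) chat)
        (fun c => (GammaFun P μ γ rf A Z N1 W0 U c).toReal)) := by
  classical
  set a := alphaC P μ γ rf A Z with ha
  set b := betaC P μ γ rf A Z with hb
  set sg := sigmaC P μ γ rf A Z with hsg
  set η : Ω → ℝ := fun ω => a + b * Z ω + sg * Real.sqrt (Z ω) * N1 ω with hηdef
  set f : ℝ → Ω → ℝ := fun c ω => U (W0 * (1 + rf) + W0 * c * η ω) with hfdef
  have hΓ : ∀ c, GammaFun P μ γ rf A Z N1 W0 U c = eexp P (f c) := fun c => rfl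
  set M := sSup (Set.range U) with hMdef
  have hM : ∀ w, U w ≤ M := fun w => le_csSup hUbdd ⟨w, rfl⟩
  have hηmeas : Measurable η := by
    apply Measurable.add
    · exact (measurable_const.add (measurable_const.mul hZmeas))
    · exact (measurable_const.mul (Real.continuous_sqrt.measurable.comp hZmeas)).mul hN1meas
  have hfmeas : ∀ c, Measurable (f c) := fun c =>
    hUcont.measurable.comp (measurable_const.add (measurable_const.mul hηmeas))
  -- pointwise concavity in c
  have hkey : ∀ (c1 c2 t s : ℝ), 0 ≤ t → 0 ≤ s → t + s = 1 → ∀ ω,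
      t * f c1 ω + s * f c2 ω ≤ f (t * c1 + s * c2) ω := by
    intro c1 c2 t s ht hs hts ω
    have h2 := hUconc.2 (Set.mem_univ (W0 * (1 + rf) + W0 * c1 * η ω))
      (Set.mem_univ (W0 * (1 + rf) + W0 * c2 * η ω)) ht hs hts
    simp only [smul_eq_mul] at h2
    have heq : t * (W0 * (1 + rf) + W0 * c1 * η ω) + s * (W0 * (1 + rf) + W0 * c2 * η ω)
        = W0 * (1 + rf) + W0 * (t * c1 + s * c2) * η ω := by
      linear_combination (W0 * (1 + rf)) * hts
    rw [heq] at h2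
    exact h2
  -- negative part at chat is finite
  have hnegchat : (∫⁻ ω, ENNReal.ofReal (-(f chat ω)) ∂P) < ⊤ := by
    rw [lt_top_iff_ne_top]
    intro htop
    rw [hΓ chat, eexp_eq_bot P htop] at hΓchat
    exact lt_irrefl _ hΓchat
  set K := |U (W0 * (1 + rf))| with hKdef
  have hf0 : ∀ ω, f 0 ω = U (W0 * (1 + rf)) := by
    intro ω; simp [hfdef]
  -- lower bound for f c
  have hlow : ∀ c ∈ Set.Icc (0:ℝ) chat, ∀ ω,
      -(f c ω) ≤ K + max (-(f chat ω)) 0 := by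
    intro c hc ω
    rcases eq_or_lt_of_le hchat with hc0 | hcpos
    · have hceq : c = chat := le_antisymm hc.2 (hc0 ▸ hc.1)
      subst hceq
      have h1 : -(f c ω) ≤ max (-(f c ω)) 0 := le_max_left _ _
      have h2 : (0:ℝ) ≤ K := abs_nonneg _
      linarith
    · set s := c / chat with hsdef
      have hs0 : 0 ≤ s := div_nonneg hc.1 (le_of_lt hcpos)
      have hs1 : s ≤ 1 := (div_le_one hcpos).2 hc.2
      have hcc : (1 - s) * 0 + s * chat = c := by
        have : s * chat = c := div_mul_cancel₀ c (ne_of_gt hcpos)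
        linarith
      have h1 := hkey 0 chat (1 - s) s (by linarith) hs0 (by ring) ω
      rw [hcc] at h1
      rw [hf0 ω] at h1
      have h2 : -U (W0 * (1 + rf)) ≤ K := neg_le_abs _
      have h3 : -(f chat ω) ≤ max (-(f chat ω)) 0 := le_max_left _ _
      have h4 : (0:ℝ) ≤ max (-(f chat ω)) 0 := le_max_right _ _
      have h5 : (0:ℝ) ≤ K := abs_nonneg _
      have e1 : (1 - s) * (-U (W0 * (1 + rf))) ≤ (1 - s) * K :=
        mul_le_mul_of_nonneg_left h2 (by linarith)
      have e2 : s * (-(f chat ω)) ≤ s * max (-(f chat ω)) 0 :=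
        mul_le_mul_of_nonneg_left h3 hs0
      have e3 : (1 - s) * K ≤ K := by
        have := mul_le_mul_of_nonneg_right (by linarith : (1 - s : ℝ) ≤ 1) h5
        linarith
      have e4 : s * max (-(f chat ω)) 0 ≤ max (-(f chat ω)) 0 := by
        have := mul_le_mul_of_nonneg_right hs1 h4
        linarith
      have e5 : (1 - s) * (-U (W0 * (1 + rf))) + s * (-(f chat ω))
          = -((1 - s) * U (W0 * (1 + rf)) + s * f chat ω) := by ring
      linarith
  have hofmax : ∀ x : ℝ, ENNReal.ofReal (max x 0) = ENNReal.ofReal x := by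
    intro x
    rcases le_total x 0 with h | h
    · rw [max_eq_right h, ENNReal.ofReal_zero, eq_comm, ENNReal.ofReal_eq_zero.2 h]
    · rw [max_eq_left h]
  -- negative parts finite on Icc
  have hneg : ∀ c ∈ Set.Icc (0:ℝ) chat, (∫⁻ ω, ENNReal.ofReal (-(f c ω)) ∂P) < ⊤ := by
    intro c hc
    calc (∫⁻ ω, ENNReal.ofReal (-(f c ω)) ∂P)
        ≤ ∫⁻ ω, (ENNReal.ofReal K + ENNReal.ofReal (-(f chat ω))) ∂P := by
          apply lintegral_mono
          intro ω
          calc ENNReal.ofReal (-(f c ω)) ≤ ENNReal.ofReal (K + max (-(f chat ω)) 0) :=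
                ENNReal.ofReal_le_ofReal (hlow c hc ω)
            _ ≤ ENNReal.ofReal K + ENNReal.ofReal (max (-(f chat ω)) 0) :=
                ENNReal.ofReal_add_le
            _ = ENNReal.ofReal K + ENNReal.ofReal (-(f chat ω)) := by rw [hofmax]
      _ = ENNReal.ofReal K * P Set.univ + ∫⁻ ω, ENNReal.ofReal (-(f chat ω)) ∂P := by
          rw [lintegral_add_left measurable_const, lintegral_const]
      _ < ⊤ := by
          rw [measure_univ, mul_one]
          exact ENNReal.add_lt_top.2 ⟨ENNReal.ofReal_lt_top, hnegchat⟩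
  have hIG : ∀ c ∈ Set.Icc (0:ℝ) chat, Integrable (f c) P ∧
      GammaFun P μ γ rf A Z N1 W0 U c = ((∫ ω, f c ω ∂P : ℝ) : EReal) := by
    intro c hc
    have h := eexp_eq_integral P (hfmeas c) (fun ω => hM _) (hneg c hc)
    exact ⟨h.1, (hΓ c).trans h.2⟩
  have htoReal : ∀ c ∈ Set.Icc (0:ℝ) chat,
      (GammaFun P μ γ rf A Z N1 W0 U c).toReal = ∫ ω, f c ω ∂P := by
    intro c hc
    rw [(hIG c hc).2, EReal.toReal_coe]
  refine ⟨?_, ?_, ?_⟩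
  · intro c hc
    rw [(hIG c hc).2]
    exact EReal.bot_lt_coe _
  · refine ⟨convex_Icc 0 chat, ?_⟩
    intro x hx y hy t s ht hs hts
    have hxy : t • x + s • y ∈ Set.Icc (0:ℝ) chat := (convex_Icc 0 chat) hx hy ht hs hts
    simp only [smul_eq_mul] at hxy ⊢
    rw [htoReal x hx, htoReal y hy, htoReal _ hxy]
    have hix := (hIG x hx).1
    have hiy := (hIG y hy).1
    have hixy := (hIG _ hxy).1
    have hcomb : Integrable (fun ω => t * f x ω + s * f y ω) P :=
      (hix.const_mul t).add (hiy.const_mul s)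
    calc t * ∫ ω, f x ω ∂P + s * ∫ ω, f y ω ∂P
        = ∫ ω, (t * f x ω + s * f y ω) ∂P := by
          rw [integral_add (hix.const_mul t) (hiy.const_mul s),
            integral_const_mul, integral_const_mul]
      _ ≤ ∫ ω, f (t * x + s * y) ω ∂P :=
          integral_mono hcomb hixy
            (fun ω => hkey x y t s ht hs hts ω)
  · intro hUstrict
    refine ⟨convex_Icc 0 chat, ?_⟩
    intro x hx y hy hxy t s ht hs hts
    have hmem : t • x + s • y ∈ Set.Icc (0:ℝ) chat :=
      (convex_Icc 0 chat) hx hy (le_of_lt ht) (le_of_lt hs) hts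
    simp only [smul_eq_mul] at hmem ⊢
    rw [htoReal x hx, htoReal y hy, htoReal _ hmem]
    have hix := (hIG x hx).1
    have hiy := (hIG y hy).1
    have hixy := (hIG _ hmem).1
    have hcomb : Integrable (fun ω => t * f x ω + s * f y ω) P :=
      (hix.const_mul t).add (hiy.const_mul s)
    -- σ > 0
    have hq : 0 < vSv P μ γ rf A Z := by
      have h := hPD.inv.dotProduct_mulVec_pos hv
      simpa [vSv] using h
    have hsgpos : 0 < sg := by
      rw [hsg, sigmaC]
      exact one_div_pos.2 (Real.sqrt_pos.2 hq)
    have hηpos : 0 < P {ω | η ω ≠ 0} :=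
      eta_ne_zero_pos P hZmeas hN1meas hN1law hindep1 hZpos a b sg hsgpos
    set g : Ω → ℝ := fun ω => f (t * x + s * y) ω - (t * f x ω + s * f y ω) with hgdef
    have hgnonneg : 0 ≤ g := fun ω => by
      simp only [hgdef, Pi.zero_apply, sub_nonneg]
      exact hkey x y t s (le_of_lt ht) (le_of_lt hs) hts ω
    have hgint : Integrable g P := hixy.sub hcomb
    have hsupp : {ω | η ω ≠ 0} ⊆ Function.support g := by
      intro ω hω
      simp only [Set.mem_setOf_eq] at hω
      simp only [Function.mem_support, hgdef]
      have hne : W0 * (1 + rf) + W0 * x * η ω ≠ W0 * (1 + rf) + W0 * y * η ω := by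
        intro h
        apply hxy
        have h' := add_left_cancel h
        have hW0η : W0 * η ω ≠ 0 := mul_ne_zero (ne_of_gt hW0) hω
        have h'' : x * (W0 * η ω) = y * (W0 * η ω) := by linear_combination h'
        exact mul_right_cancel₀ hW0η h''
      have h2 := hUstrict.2 (Set.mem_univ (W0 * (1 + rf) + W0 * x * η ω))
        (Set.mem_univ (W0 * (1 + rf) + W0 * y * η ω)) hne ht hs hts
      simp only [smul_eq_mul] at h2
      have heq : t * (W0 * (1 + rf) + W0 * x * η ω) + s * (W0 * (1 + rf) + W0 * y * η ω)
          = W0 * (1 + rf) + W0 * (t * x + s * y) * η ω := by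
        linear_combination (W0 * (1 + rf)) * hts
      rw [heq] at h2
      have : t * f x ω + s * f y ω < f (t * x + s * y) ω := h2
      linarith [this]
    have hgpos : 0 < ∫ ω, g ω ∂P := by
      rw [integral_pos_iff_support_of_nonneg hgnonneg hgint]
      exact lt_of_lt_of_le hηpos (measure_mono hsupp)
    have hsub : ∫ ω, g ω ∂P = (∫ ω, f (t * x + s * y) ω ∂P) -
        (t * ∫ ω, f x ω ∂P + s * ∫ ω, f y ω ∂P) := by
      simp only [hgdef]
      rw [integral_sub hixy hcomb,
        integral_add (hix.const_mul t) (hiy.const_mul s),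
        integral_const_mul, integral_const_mul]
    linarith [hgpos, hsub ▸ hgpos]

end
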